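/- The three-valued evaluation of shapes is ≤_p-monotone: if three-valued interpretations satisfy 𝓘 ≤_p 𝓘' (i.e., 𝓘' is more precise), then for every shape φ and every node a, the truth value of φ at a in 𝓘 is less precise than or equal to its value in 𝓘' (where f and t are maximally precise and u least precise). -/
import Mathlib


/-- The three truth values: false, unknown, true. -/
inductive TV where
  | f | u | t
deriving DecidableEq

/-- Rank of a truth value in the truth order `f ≤ u ≤ t`. -/
def TV.rank : TV → ℕ
  | .f => 0
  | .u => 1
  | .t => 2

/-- Kleene negation. -/
def TV.neg : TV → TV
  | .f => .t
  | .u => .u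
  | .t => .f

/-- Kleene conjunction (minimum in the truth order). -/
def TV.conj (a b : TV) : TV := if a.rank ≤ b.rank then a else b

/-- The precision order on truth values: `u` is least precise, `t` and `f`
are maximally precise. -/
def TV.pprec (a b : TV) : Prop := a = TV.u ∨ a = b

/-- Path expressions over property names `P`. -/
inductive PathE (P : Type*) where
  | prop (p : P)
  | inv (E : PathE P)
  | union (E₁ E₂ : PathE P)
  | comp (E₁ E₂ : PathE P)
  | star (E : PathE P)
  | opt (E : PathE P)

/-- Shapes over node names `N`, property names `P`, and shape names `S`. -/
inductive Shape (N P S : Type*) where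
  | top
  | name (s : S)
  | singleton (c : N)
  | and (φ ψ : Shape N P S)
  | neg (φ : Shape N P S)
  | geq (n : ℕ) (E : PathE P) (φ : Shape N P S)
  | eq (E₁ E₂ : PathE P)
  | disj (E₁ E₂ : PathE P)
  | closed (Q : Set P)

variable {N P S Δ : Type*}

/-- Semantics of a path expression in the fixed graph-interpretation given by
the property interpretation `pI`. -/
def evalPath (pI : P → Δ → Δ → Prop) : PathE P → Δ → Δ → Prop
  | .prop p => pI p
  | .inv E => fun a b => evalPath pI E b a
  | .union E₁ E₂ => fun a b => evalPath pI E₁ a b ∨ evalPath pI E₂ a b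
  | .comp E₁ E₂ => fun a b => ∃ c, evalPath pI E₁ a c ∧ evalPath pI E₂ c b
  | .star E => Relation.ReflTransGen (evalPath pI E)
  | .opt E => fun a b => evalPath pI E a b ∨ a = b

/-- A set has at least `n` elements. -/
def AtLeast (n : ℕ) (X : Set Δ) : Prop :=
  ∃ g : Fin n → Δ, Function.Injective g ∧ ∀ i, g i ∈ X

open Classical in
/-- Three-valued (Kleene) evaluation of a shape in a three-valued
interpretation `I : S → Δ → TV` of the shape names, over the fixed
graph-interpretation given by `cI` and `pI`. -/
noncomputable def eval3 (cI : N → Δ) (pI : P → Δ → Δ → Prop) :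
    Shape N P S → (S → Δ → TV) → Δ → TV
  | .top, _, _ => TV.t
  | .name s, I, a => I s a
  | .singleton c, _, a => if a = cI c then TV.t else TV.f
  | .and φ ψ, I, a => (eval3 cI pI φ I a).conj (eval3 cI pI ψ I a)
  | .neg φ, I, a => (eval3 cI pI φ I a).neg
  | .geq n E φ, I, a =>
      if AtLeast n {b | evalPath pI E a b ∧ eval3 cI pI φ I b = TV.t} then TV.t
      else if AtLeast n {b | evalPath pI E a b ∧ eval3 cI pI φ I b ≠ TV.f} then TV.u
      else TV.f
  | .eq E₁ E₂, _, a =>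
      if ∀ b, evalPath pI E₁ a b ↔ evalPath pI E₂ a b then TV.t else TV.f
  | .disj E₁ E₂, _, a =>
      if ∀ b, ¬(evalPath pI E₁ a b ∧ evalPath pI E₂ a b) then TV.t else TV.f
  | .closed Q, _, a =>
      if ∀ p ∉ Q, ∀ b, ¬ pI p a b then TV.t else TV.f

/-- Two-valued evaluation of a shape in an interpretation `σ : S → Set Δ` of
the shape names, over the fixed graph-interpretation given by `cI` and `pI`. -/
def eval2 (cI : N → Δ) (pI : P → Δ → Δ → Prop) :
    Shape N P S → (S → Set Δ) → Set Δ
  | .top, _ => Set.univ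
  | .name s, σ => σ s
  | .singleton c, _ => {cI c}
  | .and φ ψ, σ => eval2 cI pI φ σ ∩ eval2 cI pI ψ σ
  | .neg φ, σ => (eval2 cI pI φ σ)ᶜ
  | .geq n E φ, σ => {a | AtLeast n {b | evalPath pI E a b ∧ b ∈ eval2 cI pI φ σ}}
  | .eq E₁ E₂, _ => {a | ∀ b, evalPath pI E₁ a b ↔ evalPath pI E₂ a b}
  | .disj E₁ E₂, _ => {a | ∀ b, ¬(evalPath pI E₁ a b ∧ evalPath pI E₂ a b)}
  | .closed Q, _ => {a | ∀ p ∉ Q, ∀ b, ¬ pI p a b}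


lemma TV.pprec.neg_mono : ∀ {a b : TV}, a.pprec b → a.neg.pprec b.neg := by
  rintro a b (rfl | rfl) <;> [exact Or.inl rfl; exact Or.inr rfl]

lemma TV.pprec.conj_mono {a b c d : TV} (h1 : a.pprec b) (h2 : c.pprec d) :
    (a.conj c).pprec (b.conj d) := by
  cases a <;> cases b <;> cases c <;> cases d <;>
    simp_all [TV.pprec, TV.conj, TV.rank]

lemma AtLeast.mono {X Y : Set Δ} (hXY : X ⊆ Y) {n : ℕ} (h : AtLeast n X) :
    AtLeast n Y := by
  obtain ⟨g, hg, hm⟩ := h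
  exact ⟨g, hg, fun i => hXY (hm i)⟩

/-- The three-valued evaluation of shapes is `≤_p`-monotone: a more precise
three-valued interpretation yields a more precise truth value for every shape
at every node. -/
theorem stmt_14 (cI : N → Δ) (pI : P → Δ → Δ → Prop)
    (I I' : S → Δ → TV) (h : ∀ s a, (I s a).pprec (I' s a)) :
    ∀ (φ : Shape N P S) (a : Δ),
      (eval3 cI pI φ I a).pprec (eval3 cI pI φ I' a) := by
  intro φ
  induction φ with
  | top => intro a; exact Or.inr rfl
  | name s => intro a; exact h s a
  | singleton c => intro a; exact Or.inr rfl
  | and φ ψ ihφ ihψ => intro a; exact (ihφ a).conj_mono (ihψ a)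
  | neg φ ihφ => intro a; exact (ihφ a).neg_mono
  | geq n E φ ih =>
    intro a
    simp only [eval3]
    have hT : {b | evalPath pI E a b ∧ eval3 cI pI φ I b = TV.t} ⊆
        {b | evalPath pI E a b ∧ eval3 cI pI φ I' b = TV.t} := by
      rintro b ⟨hE, ht⟩
      refine ⟨hE, ?_⟩
      rcases ih b with h1 | h1
      · rw [h1] at ht; exact absurd ht (by decide)
      · rw [← h1]; exact ht
    have hNF : {b | evalPath pI E a b ∧ eval3 cI pI φ I' b ≠ TV.f} ⊆
        {b | evalPath pI E a b ∧ eval3 cI pI φ I b ≠ TV.f} := by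
      rintro b ⟨hE, hf⟩
      refine ⟨hE, fun hc => ?_⟩
      rcases ih b with h1 | h1
      · rw [h1] at hc; exact absurd hc (by decide)
      · exact hf (h1 ▸ hc)
    by_cases h1 : AtLeast n {b | evalPath pI E a b ∧ eval3 cI pI φ I b = TV.t}
    · rw [if_pos h1, if_pos (h1.mono hT)]; exact Or.inr rfl
    · rw [if_neg h1]
      by_cases h2 : AtLeast n {b | evalPath pI E a b ∧ eval3 cI pI φ I b ≠ TV.f}
      · rw [if_pos h2]; exact Or.inl rfl
      · rw [if_neg h2]
        have hT' : ¬ AtLeast n {b | evalPath pI E a b ∧ eval3 cI pI φ I' b = TV.t} := by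
          intro hc
          refine h2 (hc.mono ?_)
          intro b hb
          exact hNF ⟨hb.1, by rw [hb.2]; decide⟩
        rw [if_neg hT', if_neg (fun hc => h2 (hc.mono hNF))]
        exact Or.inr rfl
  | eq E₁ E₂ => intro a; exact Or.inr rfl
  | disj E₁ E₂ => intro a; exact Or.inr rfl
  | closed Q => intro a; exact Or.inr rfl
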